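/- (Mackey Decomposition) Let k be a commutative ring, G a group with subgroups H and K, and let S ⊆ G be a set of representatives for the double cosets K\G/H. For any k-linear representation V of H there is an isomorphism of representations of K: Res^G_K(Ind^G_H V) ≅ ⊕_{g ∈ S} Ind^K_{K ∩ gHg⁻¹}(V^g), where V^g is the representation of the subgroup K ∩ gHg⁻¹ on the k-module V in which x ∈ K ∩ gHg⁻¹ acts as the element g⁻¹ x g ∈ H acts on V. -/

import Mathlib

open CategoryTheory CategoryTheory.Limits

variable {G : Type} [Group G]

/-- The group homomorphism `K ∩ gHg⁻¹ →* H` sending `x` to `g⁻¹ x g`. -/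
def conjHom (H K : Subgroup G) (g : G) :
    ↥(K ⊓ Subgroup.map (MulAut.conj g).toMonoidHom H) →* ↥H where
  toFun x := ⟨g⁻¹ * (x : G) * g, by
    obtain ⟨h, hh, heq⟩ := Subgroup.mem_map.mp (Subgroup.mem_inf.mp x.2).2
    simp only [← heq, MulAut.conj_apply, MulEquiv.coe_toMonoidHom]
    simpa [mul_assoc] using hh⟩
  map_one' := by ext; simp
  map_mul' x y := by ext; simp [mul_assoc]; exact mul_assoc (x : G) (y : G) g



set_option maxHeartbeats 1000000

namespace MackeyAux


noncomputable section

variable {k : Type} [CommRing k] {A B : Type} [Group A] [Group B] (φ : A →* B)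

lemma repHom_ext {C : Type} [Group C] {X Y : Rep.{0} k C} {f g : X ⟶ Y}
    (h : ∀ x, f.hom x = g.hom x) : f = g :=
  Rep.hom_ext (Representation.IntertwiningMap.ext (LinearMap.ext h))

/-- Carrier of the coinduced representation along `φ`. -/
def coindCarrier (U : Rep.{0} k A) : Submodule k (B → U) where
  carrier := {f | ∀ (a : A) (b : B), f (φ a * b) = U.ρ a (f b)}
  add_mem' {f g} hf hg := fun a b => by
    simp only [Pi.add_apply, hf a b, hg a b, map_add]
  zero_mem' := fun a b => by simp
  smul_mem' c f hf := fun a b => by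
    simp only [Pi.smul_apply, hf a b, map_smul]

/-- The `B`-representation on the coinduced module. -/
def coindρ (U : Rep.{0} k A) : Representation k B (coindCarrier φ U) where
  toFun b :=
    { toFun := fun f => ⟨fun b' => f.1 (b' * b), fun a b' => by
        have := f.2 a (b' * b)
        simpa [mul_assoc] using this⟩
      map_add' := fun f g => Subtype.ext (funext fun b' => rfl)
      map_smul' := fun c f => Subtype.ext (funext fun b' => rfl) }
  map_one' := by
    refine LinearMap.ext fun f => Subtype.ext (funext fun b' => ?_)
    simp
  map_mul' b c := by
    refine LinearMap.ext fun f => Subtype.ext (funext fun b' => ?_)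
    simp [mul_assoc]

/-- The coinduced representation as an object of `Rep.{0} k B`. -/
def coindObj (U : Rep.{0} k A) : Rep.{0} k B := Rep.of (coindρ φ U)

variable {φ}

/-- Evaluation of an element of the coinduced module. -/
def coindVal {U : Rep.{0} k A} (f : (coindObj φ U).V) : B → U := f.1

lemma coindVal_spec {U : Rep.{0} k A} (f : (coindObj φ U).V) (a : A) (b : B) :
    coindVal f (φ a * b) = U.ρ a (coindVal f b) := f.2 a b

/-- Construct an element of the coinduced module. -/
def coindOf {U : Rep.{0} k A} (f : coindCarrier φ U) : (coindObj φ U).V := f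

lemma coindVal_coindOf {U : Rep.{0} k A} (f : coindCarrier φ U) (b : B) :
    coindVal (coindOf (φ := φ) f) b = f.1 b := rfl

lemma coind_ext {U : Rep.{0} k A} {f g : (coindObj φ U).V}
    (h : ∀ b, coindVal f b = coindVal g b) : f = g := Subtype.ext (funext h)

lemma coindVal_ρ {U : Rep.{0} k A} (b : B) (f : (coindObj φ U).V) (b' : B) :
    coindVal ((coindObj φ U).ρ b f) b' = coindVal f (b' * b) := rfl

lemma coindVal_add {U : Rep.{0} k A} (f g : (coindObj φ U).V) (b : B) :
    coindVal (f + g) b = coindVal f b + coindVal g b := rfl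

lemma coindVal_smul {U : Rep.{0} k A} (c : k) (f : (coindObj φ U).V) (b : B) :
    coindVal (c • f) b = c • coindVal f b := rfl

variable (φ)

/-- Functoriality of coinduction on morphisms. -/
def coindMap {U U' : Rep.{0} k A} (g : U ⟶ U') : coindObj φ U ⟶ coindObj φ U' :=
  Rep.ofHom ⟨
    { toFun := fun (f : (coindObj φ U).V) => coindOf ⟨fun b => g.hom (coindVal f b), fun a b => by
        show g.hom (coindVal f (φ a * b)) = U'.ρ a (g.hom (coindVal f b))
        rw [coindVal_spec]
        exact Rep.hom_comm_apply g a _⟩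
      map_add' := fun f f' => coind_ext (fun b => by
        show g.hom (coindVal f b + coindVal f' b) = g.hom (coindVal f b) + g.hom (coindVal f' b)
        rw [map_add])
      map_smul' := fun c f => coind_ext (fun b => by
        show g.hom (c • coindVal f b) = c • g.hom (coindVal f b)
        rw [map_smul]) },
  fun b => rfl⟩

lemma coindMap_val {U U' : Rep.{0} k A} (g : U ⟶ U') (f : (coindObj φ U).V) (b : B) :
    coindVal ((coindMap φ g).hom f) b = g.hom (coindVal f b) := rfl

/-- The adjunction hom-equivalence for restriction ⊣ coinduction. -/
def resCoindEquiv (X : Rep.{0} k B) (U : Rep.{0} k A) :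
    ((Rep.resFunctor φ).obj X ⟶ U) ≃ (X ⟶ coindObj φ U) where
  toFun α :=
    Rep.ofHom ⟨
        { toFun := fun x => coindOf ⟨fun b => α.hom (X.ρ b x), fun a b => by
            show α.hom (X.ρ (φ a * b) x) = U.ρ a (α.hom (X.ρ b x))
            have h1 : X.ρ (φ a * b) x = X.ρ (φ a) (X.ρ b x) := by
              rw [map_mul]; rfl
            rw [h1]
            exact Rep.hom_comm_apply α a (X.ρ b x)⟩
          map_add' := fun x y => coind_ext (fun b => by
            show α.hom (X.ρ b (x + y)) = α.hom (X.ρ b x) + α.hom (X.ρ b y)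
            rw [map_add, map_add])
          map_smul' := fun c x => coind_ext (fun b => by
            show α.hom (X.ρ b (c • x)) = c • α.hom (X.ρ b x)
            rw [map_smul, map_smul]) },
      fun (b : B) => by
        refine LinearMap.ext fun x => coind_ext (fun b' => ?_)
        show α.hom (X.ρ b' (X.ρ b x)) = α.hom (X.ρ (b' * b) x)
        rw [map_mul]; rfl⟩
  invFun Ψ :=
    Rep.ofHom ⟨
        { toFun := fun x => coindVal (Ψ.hom x) 1
          map_add' := fun x y => by
            show coindVal (Ψ.hom (x + y)) 1 = coindVal (Ψ.hom x) 1 + coindVal (Ψ.hom y) 1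
            rw [map_add, coindVal_add]
          map_smul' := fun c x => by
            show coindVal (Ψ.hom (c • x)) 1 = c • coindVal (Ψ.hom x) 1
            rw [map_smul, coindVal_smul] },
      fun (a : A) => by
        refine LinearMap.ext fun x => ?_
        show coindVal (Ψ.hom (X.ρ (φ a) x)) 1 = U.ρ a (coindVal (Ψ.hom x) 1)
        have h1 : Ψ.hom (X.ρ (φ a) x) = (coindObj φ U).ρ (φ a) (Ψ.hom x) :=
          Rep.hom_comm_apply Ψ (φ a) x
        rw [h1, coindVal_ρ, ← coindVal_spec]
        rw [one_mul, mul_one]⟩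
  left_inv α := by
    refine repHom_ext (fun x => ?_)
    show α.hom (X.ρ 1 x) = α.hom x
    rw [map_one]
    rfl
  right_inv Ψ := by
    refine repHom_ext (fun x => coind_ext (fun b => ?_))
    show coindVal (Ψ.hom (X.ρ b x)) 1 = coindVal (Ψ.hom x) b
    have h1 : Ψ.hom (X.ρ b x) = (coindObj φ U).ρ b (Ψ.hom x) :=
      Rep.hom_comm_apply Ψ b x
    rw [h1, coindVal_ρ, one_mul]

lemma resCoindEquiv_natural (X : Rep.{0} k B) {U U' : Rep.{0} k A}
    (α : (Rep.resFunctor φ).obj X ⟶ U) (g : U ⟶ U') :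
    resCoindEquiv φ X U' (α ≫ g) = resCoindEquiv φ X U α ≫ coindMap φ g := by
  refine repHom_ext (fun x => coind_ext (fun b => ?_))
  rfl

end


section Mackey

variable {k : Type} [CommRing k] {H K : Subgroup G} {S : Set G}

variable (hS : ∀ g : G, ∃! s, s ∈ S ∧
      DoubleCoset.doubleCoset s (K : Set G) (H : Set G) = DoubleCoset.doubleCoset g (K : Set G) (H : Set G))

noncomputable def repS (g : G) : S := ⟨(hS g).choose, (hS g).choose_spec.1.1⟩

lemma doset_repS (g : G) :
    DoubleCoset.doubleCoset ((repS hS g : G)) (K : Set G) (H : Set G) =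
      DoubleCoset.doubleCoset g (K : Set G) (H : Set G) :=
  (hS g).choose_spec.1.2

lemma repS_eq (g : G) (s : S)
    (h : DoubleCoset.doubleCoset (s : G) (K : Set G) (H : Set G) =
      DoubleCoset.doubleCoset g (K : Set G) (H : Set G)) : repS hS g = s :=
  Subtype.ext ((hS g).choose_spec.2 s ⟨s.2, h⟩).symm

lemma exists_decomp (g : G) : ∃ (x : K) (h : H), g = x * (repS hS g : G) * h := by
  have hg : g ∈ DoubleCoset.doubleCoset ((repS hS g : G)) (K : Set G) (H : Set G) := by
    rw [doset_repS hS]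
    exact DoubleCoset.mem_doubleCoset_self K H g
  obtain ⟨x, hx, y, hy, hxy⟩ := DoubleCoset.mem_doubleCoset.mp hg
  exact ⟨⟨x, hx⟩, ⟨y, hy⟩, hxy⟩

noncomputable def dX (g : G) : K := (exists_decomp hS g).choose

noncomputable def dH (g : G) : H := (exists_decomp hS g).choose_spec.choose

lemma decomp_spec (g : G) :
    g = (dX hS g : G) * (repS hS g : G) * (dH hS g : G) :=
  (exists_decomp hS g).choose_spec.choose_spec

variable (V : Rep.{0} k ↥H) (W : Rep.{0} k ↥K)

lemma res_comm (s : S)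
    (τ : (Rep.resFunctor (conjHom H K (s : G))).obj V ⟶
      (Rep.resFunctor (Subgroup.inclusion inf_le_left)).obj W)
    (y : ↥(K ⊓ Subgroup.map (MulAut.conj (s : G)).toMonoidHom H)) (v : V) :
    τ.hom (V.ρ (conjHom H K (s : G) y) v) =
      W.ρ (Subgroup.inclusion inf_le_left y) (τ.hom v) :=
  Rep.hom_comm_apply τ y v

lemma indep (s : S) (x x' : K) (h h' : H)
    (heq : (x : G) * s * h = (x' : G) * s * h')
    (τ : (Rep.resFunctor (conjHom H K (s : G))).obj V ⟶
      (Rep.resFunctor (Subgroup.inclusion inf_le_left)).obj W)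
    (v : V) :
    W.ρ x (τ.hom (V.ρ h v)) = W.ρ x' (τ.hom (V.ρ h' v)) := by
  have key : ((s : G))⁻¹ * ((x' : G)⁻¹ * (x : G)) * (s : G) = (h' : G) * (h : G)⁻¹ := by
    calc ((s : G))⁻¹ * ((x' : G)⁻¹ * (x : G)) * (s : G)
        = (s : G)⁻¹ * (x' : G)⁻¹ * ((x : G) * (s : G) * (h : G)) * (h : G)⁻¹ := by group
      _ = (s : G)⁻¹ * (x' : G)⁻¹ * ((x' : G) * (s : G) * (h' : G)) * (h : G)⁻¹ := by rw [heq]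
      _ = (h' : G) * (h : G)⁻¹ := by group
  have hyK : (x' : G)⁻¹ * (x : G) ∈ K := mul_mem (inv_mem x'.2) x.2
  have hyM : (x' : G)⁻¹ * (x : G) ∈ Subgroup.map (MulAut.conj (s : G)).toMonoidHom H := by
    refine Subgroup.mem_map.mpr ⟨(h' : G) * (h : G)⁻¹, mul_mem h'.2 (inv_mem h.2), ?_⟩
    show (s : G) * ((h' : G) * (h : G)⁻¹) * (s : G)⁻¹ = (x' : G)⁻¹ * (x : G)
    rw [← key]; group
  set yL : ↥(K ⊓ Subgroup.map (MulAut.conj (s : G)).toMonoidHom H) :=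
    ⟨(x' : G)⁻¹ * (x : G), hyK, hyM⟩ with hyL
  have hconj : conjHom H K (s : G) yL = h' * h⁻¹ := by
    refine Subtype.ext ?_
    show (s : G)⁻¹ * ((x' : G)⁻¹ * (x : G)) * (s : G) = ((h' * h⁻¹ : H) : G)
    rw [key]; rfl
  have hincl : Subgroup.inclusion (inf_le_left
      (a := K) (b := Subgroup.map (MulAut.conj (s : G)).toMonoidHom H)) yL = x'⁻¹ * x :=
    Subtype.ext rfl
  have hx : x = x' * (x'⁻¹ * x) := by group
  calc W.ρ x (τ.hom (V.ρ h v))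
      = W.ρ x' (W.ρ (x'⁻¹ * x) (τ.hom (V.ρ h v))) := by
        conv_lhs => rw [hx, map_mul, Module.End.mul_apply]
    _ = W.ρ x' (τ.hom (V.ρ (conjHom H K (s : G) yL) (V.ρ h v))) := by
        rw [res_comm, hincl]
    _ = W.ρ x' (τ.hom (V.ρ h' v)) := by
        rw [hconj]
        congr 2
        rw [← Module.End.mul_apply, ← map_mul]
        congr 1
        group

end Mackey

section Part3

variable {k : Type} [CommRing k] {H K : Subgroup G} {S : Set G}

variable (hS : ∀ g : G, ∃! s, s ∈ S ∧
      DoubleCoset.doubleCoset s (K : Set G) (H : Set G) = DoubleCoset.doubleCoset g (K : Set G) (H : Set G))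
variable (V : Rep.{0} k ↥H) (W : Rep.{0} k ↥K)

/-- The underlying function of the inverse map in the key equivalence. -/
noncomputable def backHom
    (σ : ∀ s : S, ((Rep.resFunctor (conjHom H K (s : G))).obj V ⟶
      (Rep.resFunctor (Subgroup.inclusion inf_le_left)).obj W))
    (v : V) (g : G) : W :=
  W.ρ (dX hS g) ((σ (repS hS g)).hom (V.ρ (dH hS g) v))

lemma backHom_eq'
    (σ : ∀ s : S, ((Rep.resFunctor (conjHom H K (s : G))).obj V ⟶
      (Rep.resFunctor (Subgroup.inclusion inf_le_left)).obj W))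
    (v : V) (g : G) (s : S) (x : K) (h : H) (hgeq : g = (x : G) * s * h) :
    backHom hS V W σ v g = W.ρ x ((σ s).hom (V.ρ h v)) := by
  have hg : g ∈ DoubleCoset.doubleCoset (s : G) (K : Set G) (H : Set G) := by
    rw [hgeq]; exact DoubleCoset.mem_doubleCoset.mpr ⟨x, x.2, h, h.2, rfl⟩
  have hrep : repS hS g = s := repS_eq hS _ s (DoubleCoset.doubleCoset_eq_of_mem hg).symm
  subst hrep
  unfold backHom
  exact indep V W _ (dX hS g) x (dH hS g) h ((decomp_spec hS g).symm.trans hgeq) (σ _) v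

lemma backHom_eq
    (σ : ∀ s : S, ((Rep.resFunctor (conjHom H K (s : G))).obj V ⟶
      (Rep.resFunctor (Subgroup.inclusion inf_le_left)).obj W))
    (v : V) (s : S) (x : K) (h : H) :
    backHom hS V W σ v ((x : G) * s * h) = W.ρ x ((σ s).hom (V.ρ h v)) :=
  backHom_eq' hS V W σ v _ s x h rfl

lemma coindValK (f : (coindObj (K.subtype) W).V) (a : ↥K) (b : G) :
    coindVal f ((a : G) * b) = W.ρ a (coindVal f b) := f.2 a b

lemma backHom_mem
    (σ : ∀ s : S, ((Rep.resFunctor (conjHom H K (s : G))).obj V ⟶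
      (Rep.resFunctor (Subgroup.inclusion inf_le_left)).obj W))
    (v : V) : (fun g => backHom hS V W σ v g) ∈ coindCarrier (K.subtype) W := by
  intro a g
  show backHom hS V W σ v ((a : G) * g) = W.ρ a (backHom hS V W σ v g)
  have harg : (a : G) * g =
      ((a * dX hS g : K) : G) * (repS hS g : G) * (dH hS g : G) := by
    conv_lhs => rw [decomp_spec hS g]
    push_cast
    group
  rw [backHom_eq' hS V W σ v _ _ _ _ harg]
  conv_rhs => rw [decomp_spec hS g]
  rw [backHom_eq, map_mul, Module.End.mul_apply]

/-- Forward map of the key equivalence. -/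
noncomputable def e3Fwd
    (φ : V ⟶ (Rep.resFunctor H.subtype).obj (coindObj (K.subtype) W))
    (s : S) :
    ((Rep.resFunctor (conjHom H K (s : G))).obj V ⟶
      (Rep.resFunctor (Subgroup.inclusion inf_le_left)).obj W) :=
    Rep.ofHom ⟨
        { toFun := fun v => coindVal (φ.hom v) ((s : S) : G)
          map_add' := fun v v' => by
            show coindVal (φ.hom (v + v')) ((s : S) : G)
                = coindVal (φ.hom v) ((s : S) : G) + coindVal (φ.hom v') ((s : S) : G)
            rw [map_add, coindVal_add]
          map_smul' := fun c v => by
            show coindVal (φ.hom (c • v)) ((s : S) : G) = c • coindVal (φ.hom v) ((s : S) : G)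
            rw [map_smul, coindVal_smul] },
      fun (y : ↥(K ⊓ Subgroup.map (MulAut.conj ((s : S) : G)).toMonoidHom H)) =>
        LinearMap.ext fun v => by
        show coindVal (φ.hom (V.ρ (conjHom H K ((s : S) : G) y) v)) ((s : S) : G)
            = W.ρ (Subgroup.inclusion inf_le_left y) (coindVal (φ.hom v) ((s : S) : G))
        have h1 : φ.hom (V.ρ (conjHom H K ((s : S) : G) y) v)
            = (coindObj (K.subtype) W).ρ (H.subtype (conjHom H K ((s : S) : G) y)) (φ.hom v) :=
          Rep.hom_comm_apply φ _ v
        rw [h1, coindVal_ρ]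
        have h2 : ((s : S) : G) * (H.subtype (conjHom H K ((s : S) : G) y) : G)
            = ((⟨(y : G), y.2.1⟩ : ↥K) : G) * ((s : S) : G) := by
          show (s : G) * ((s : G)⁻¹ * (y : G) * (s : G)) = (y : G) * (s : G)
          group
        rw [h2, coindValK]
        rfl⟩

/-- Backward map of the key equivalence. -/
noncomputable def e3Bwd
    (σ : ∀ s : S, ((Rep.resFunctor (conjHom H K (s : G))).obj V ⟶
      (Rep.resFunctor (Subgroup.inclusion inf_le_left)).obj W)) :
    (V ⟶ (Rep.resFunctor H.subtype).obj (coindObj (K.subtype) W)) :=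
    Rep.ofHom ⟨
        { toFun := fun v => coindOf ⟨fun g => backHom hS V W σ v g, backHom_mem hS V W σ v⟩
          map_add' := fun v v' => coind_ext (fun g => by
            show backHom hS V W σ (v + v') g = backHom hS V W σ v g + backHom hS V W σ v' g
            unfold backHom
            rw [map_add, map_add, map_add])
          map_smul' := fun c v => coind_ext (fun g => by
            show backHom hS V W σ (c • v) g = c • backHom hS V W σ v g
            unfold backHom
            rw [map_smul, map_smul, map_smul]) },
      fun (h₀ : ↥H) => LinearMap.ext fun v => coind_ext (fun g => by
        show backHom hS V W σ (V.ρ h₀ v) g = backHom hS V W σ v (g * (h₀ : G))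
        have harg : g * (h₀ : G) =
            ((dX hS g : K) : G) * (repS hS g : G) * ((dH hS g * h₀ : H) : G) := by
          conv_lhs => rw [decomp_spec hS g]
          push_cast
          group
        rw [backHom_eq' hS V W σ v _ _ _ _ harg]
        conv_lhs => rw [decomp_spec hS g]
        rw [backHom_eq, map_mul, Module.End.mul_apply])⟩

lemma e3Bwd_val
    (σ : ∀ s : S, ((Rep.resFunctor (conjHom H K (s : G))).obj V ⟶
      (Rep.resFunctor (Subgroup.inclusion inf_le_left)).obj W))
    (v : V) (g : G) :
    coindVal ((e3Bwd hS V W σ).hom v) g = backHom hS V W σ v g := rfl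

lemma e3Fwd_apply
    (φ : V ⟶ (Rep.resFunctor H.subtype).obj (coindObj (K.subtype) W))
    (s : S) (v : V) :
    (e3Fwd V W φ s).hom v = coindVal (φ.hom v) ((s : S) : G) := rfl

/-- The key equivalence: maps into the coinduced representation decompose along double cosets. -/
noncomputable def e3Equiv :
    (V ⟶ (Rep.resFunctor H.subtype).obj (coindObj (K.subtype) W)) ≃
    (∀ s : S, ((Rep.resFunctor (conjHom H K (s : G))).obj V ⟶
      (Rep.resFunctor (Subgroup.inclusion inf_le_left)).obj W)) where
  toFun := e3Fwd V W
  invFun := e3Bwd hS V W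
  left_inv φ := by
    refine repHom_ext (fun v => coind_ext (fun g => ?_))
    rw [e3Bwd_val]
    conv_lhs => rw [decomp_spec hS g]
    rw [backHom_eq, e3Fwd_apply]
    have hφ : φ.hom (V.ρ (dH hS g) v)
        = (coindObj (K.subtype) W).ρ (H.subtype (dH hS g)) (φ.hom v) :=
      Rep.hom_comm_apply φ _ v
    rw [hφ, coindVal_ρ, ← coindValK, ← mul_assoc]
    show coindVal (φ.hom v) ((dX hS g : G) * (repS hS g : G) * (dH hS g : G)) = _
    rw [← decomp_spec hS g]
  right_inv σ := by
    funext s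
    refine repHom_ext (fun v => ?_)
    rw [e3Fwd_apply, e3Bwd_val]
    have h1 : ((s : S) : G) = ((1 : K) : G) * s * ((1 : H) : G) := by simp
    rw [backHom_eq' hS V W σ v _ s 1 1 h1]
    simp

end Part3

section Part4

variable {k : Type} [CommRing k] {H K : Subgroup G}

/-- The functor `W ↦ ∏_s Hom (V^s) (Res W)` corepresented by both sides of Mackey. -/
def Fdef (S : Set G) (V : Rep.{0} k ↥H) : Rep.{0} k ↥K ⥤ Type where
  obj W := ∀ s : S, ((Rep.resFunctor (conjHom H K (s : G))).obj V ⟶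
      (Rep.resFunctor (Subgroup.inclusion inf_le_left)).obj W)
  map f := TypeCat.ofHom fun σ => fun s => σ s ≫
    (Rep.resFunctor (Subgroup.inclusion inf_le_left)).map f
  map_id W := by
    refine ConcreteCategory.hom_ext _ _ fun σ => funext fun s => ?_
    show σ s ≫ (Rep.resFunctor (Subgroup.inclusion inf_le_left)).map (𝟙 W) = σ s
    rw [CategoryTheory.Functor.map_id, Category.comp_id]
  map_comp f g := by
    refine ConcreteCategory.hom_ext _ _ fun σ => funext fun s => ?_
    show σ s ≫ (Rep.resFunctor (Subgroup.inclusion inf_le_left)).map (f ≫ g) =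
      (σ s ≫ (Rep.resFunctor (Subgroup.inclusion inf_le_left)).map f) ≫
      (Rep.resFunctor (Subgroup.inclusion inf_le_left)).map g
    rw [CategoryTheory.Functor.map_comp, Category.assoc]

variable {S : Set G}
variable (hS : ∀ g : G, ∃! s, s ∈ S ∧
      DoubleCoset.doubleCoset s (K : Set G) (H : Set G) = DoubleCoset.doubleCoset g (K : Set G) (H : Set G))
variable (V : Rep.{0} k ↥H)

lemma e3Equiv_natural {W W' : Rep.{0} k ↥K} (f : W ⟶ W')
    (φ : V ⟶ (Rep.resFunctor H.subtype).obj (coindObj (K.subtype) W))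
    (s : S) :
    e3Equiv hS V W'
        (φ ≫ (Rep.resFunctor H.subtype).map (coindMap K.subtype f)) s
      = e3Equiv hS V W φ s ≫
        (Rep.resFunctor (Subgroup.inclusion inf_le_left)).map f := by
  refine repHom_ext (fun v => ?_)
  rfl

/-- The left-hand side of Mackey corepresents `Fdef`. -/
noncomputable def corepA (Ind : Rep.{0} k ↥H ⥤ Rep.{0} k G)
    (adj : Ind ⊣ Rep.resFunctor H.subtype) :
    (Fdef S V).CorepresentableBy
      ((Rep.resFunctor K.subtype).obj (Ind.obj V)) where
  homEquiv {W} :=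
    ((resCoindEquiv K.subtype (Ind.obj V) W).trans
      (adj.homEquiv V (coindObj (K.subtype) W))).trans (e3Equiv hS V W)
  homEquiv_comp {W W'} g f := by
    funext s
    show e3Equiv hS V W' (adj.homEquiv V _ (resCoindEquiv K.subtype (Ind.obj V) W' (f ≫ g))) s = _
    rw [resCoindEquiv_natural, Adjunction.homEquiv_naturality_right]
    exact e3Equiv_natural hS V g _ s

/-- The right-hand side of Mackey corepresents `Fdef`. -/
noncomputable def corepB
    (IndK : ∀ s : S, Rep.{0} k ↥(K ⊓ Subgroup.map (MulAut.conj (s : G)).toMonoidHom H) ⥤ Rep.{0} k ↥K)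
    (adjK : ∀ s : S, IndK s ⊣
      Rep.resFunctor (Subgroup.inclusion inf_le_left)) :
    (Fdef S V).CorepresentableBy
      (∐ fun s : S => (IndK s).obj
        ((Rep.resFunctor (conjHom H K (s : G))).obj V)) where
  homEquiv {W} :=
    { toFun := fun g s => (adjK s).homEquiv _ W
        (Sigma.ι (fun s : S => (IndK s).obj
          ((Rep.resFunctor (conjHom H K (s : G))).obj V)) s ≫ g)
      invFun := fun σ => Sigma.desc fun s => ((adjK s).homEquiv _ W).symm (σ s)
      left_inv := fun g => by
        refine Sigma.hom_ext _ _ fun s => ?_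
        rw [Sigma.ι_desc, Equiv.symm_apply_apply]
      right_inv := fun σ => by
        funext s
        show (adjK s).homEquiv _ W
          (Sigma.ι (fun s : S => (IndK s).obj
            ((Rep.resFunctor (conjHom H K (s : G))).obj V)) s ≫
            Sigma.desc fun s => ((adjK s).homEquiv _ W).symm (σ s)) = σ s
        rw [Sigma.ι_desc, Equiv.apply_symm_apply] }
  homEquiv_comp {W W'} g f := by
    funext s
    show (adjK s).homEquiv _ W'
      (Sigma.ι (fun s : S => (IndK s).obj
        ((Rep.resFunctor (conjHom H K (s : G))).obj V)) s ≫
        (f ≫ g)) = _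
    rw [← Category.assoc, Adjunction.homEquiv_naturality_right]
    rfl

/-- An object corepresenting the same functor as another is isomorphic to it. -/
noncomputable def isoOfCorep {C : Type 1} [Category.{0} C] {F : C ⥤ Type} {X Y : C}
    (eX : F.CorepresentableBy X) (eY : F.CorepresentableBy Y) : X ≅ Y where
  hom := eX.homEquiv.symm (eY.homEquiv (𝟙 Y))
  inv := eY.homEquiv.symm (eX.homEquiv (𝟙 X))
  hom_inv_id := eX.homEquiv.injective (by
    rw [eX.homEquiv_comp, Equiv.apply_symm_apply, ← eY.homEquiv_comp, Category.id_comp,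
      Equiv.apply_symm_apply])
  inv_hom_id := eY.homEquiv.injective (by
    rw [eY.homEquiv_comp, Equiv.apply_symm_apply, ← eX.homEquiv_comp, Category.id_comp,
      Equiv.apply_symm_apply])

end Part4

end MackeyAux

/-- Mackey decomposition: for subgroups `H, K` of `G`, a set `S` of representatives of the
double cosets `K \ G / H`, and a `k`-linear representation `V` of `H`,
`Res^G_K (Ind^G_H V) ≅ ⊕_{g ∈ S} Ind^K_{K ∩ gHg⁻¹} (V^g)`,
where induction functors are (arbitrary) left adjoints of the corresponding restriction
functors, and `V^g` is the representation of `K ∩ gHg⁻¹` in which `x` acts as `g⁻¹ x g`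
acts on `V`. -/


theorem stmt7 (k : Type) [CommRing k] (H K : Subgroup G) (S : Set G)
    (hS : ∀ g : G, ∃! s, s ∈ S ∧
      DoubleCoset.doubleCoset s (K : Set G) (H : Set G) = DoubleCoset.doubleCoset g (K : Set G) (H : Set G))
    (Ind : Rep.{0} k ↥H ⥤ Rep.{0} k G)
    (adj : Ind ⊣ Rep.resFunctor H.subtype)
    (IndK : ∀ s : S, Rep.{0} k ↥(K ⊓ Subgroup.map (MulAut.conj (s : G)).toMonoidHom H) ⥤ Rep.{0} k ↥K)
    (adjK : ∀ s : S, IndK s ⊣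
      Rep.resFunctor (Subgroup.inclusion inf_le_left))
    (V : Rep.{0} k ↥H) :
    Nonempty ((Rep.resFunctor K.subtype).obj (Ind.obj V) ≅
      ∐ fun s : S =>
        (IndK s).obj ((Rep.resFunctor (conjHom H K (s : G))).obj V)) := by
  exact ⟨MackeyAux.isoOfCorep (MackeyAux.corepA hS V Ind adj) (MackeyAux.corepB V IndK adjK)⟩
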